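/- Let (F,v) be a henselian valued field of equal characteristic p > 0 (char F = char Fv = p) such that: (i) (F,v) is defectless, i.e. for every finite field extension L/F and every valuation w on L extending v, [L:F] = (w(L^×) : v(F^×)) · [Lw : Fv]; (ii) the value group v(F^×) is p-divisible; (iii) every finite field extension of the residue field Fv has degree prime to p. Then F is a perfect field. -/

import Mathlib

set_option maxHeartbeats 1000000


open IsLocalRing

namespace Paper

variable {K L : Type} [Field K] [Field L]

/-- The ring homomorphism `A →+* B` induced by `f : K →+* L` when `B.comap f = A`. -/
def inducedHom (f : K →+* L) (A : ValuationSubring K) (B : ValuationSubring L)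
    (h : B.comap f = A) : A →+* B where
  toFun a := ⟨f a, by
    have ha : (a : K) ∈ B.comap f := by rw [h]; exact a.2
    exact ValuationSubring.mem_comap.mp ha⟩
  map_one' := Subtype.ext (map_one f)
  map_mul' x y := Subtype.ext (map_mul f x.1 y.1)
  map_zero' := Subtype.ext (map_zero f)
  map_add' x y := Subtype.ext (map_add f x.1 y.1)

theorem isLocalHom_inducedHom (f : K →+* L) (A : ValuationSubring K) (B : ValuationSubring L)
    (h : B.comap f = A) : IsLocalHom (inducedHom f A B h) := by
  constructor
  intro a ha
  have hane : (a : K) ≠ 0 := by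
    intro h0
    have hz : (inducedHom f A B h) a = 0 := by
      apply Subtype.ext
      show f (a : K) = 0
      rw [h0, map_zero]
    rw [hz] at ha
    exact not_isUnit_zero ha
  have hinvB : f ((a : K)⁻¹) ∈ B := by
    obtain ⟨u, hu⟩ := ha
    have h1 : ((u⁻¹ : Bˣ) : B) * (inducedHom f A B h a) = 1 := by rw [← hu]; exact u.inv_mul
    have h2 : (((u⁻¹ : Bˣ) : B) : L) * f (a : K) = 1 := congrArg Subtype.val h1
    have h3 : f ((a : K)⁻¹) = (((u⁻¹ : Bˣ) : B) : L) := by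
      rw [map_inv₀]
      exact inv_eq_of_mul_eq_one_right (by rw [mul_comm]; exact h2)
    rw [h3]
    exact (((u⁻¹ : Bˣ) : B)).2
  have hinv : (a : K)⁻¹ ∈ A := by
    have hc : (a : K)⁻¹ ∈ B.comap f := ValuationSubring.mem_comap.mpr hinvB
    rwa [h] at hc
  apply IsUnit.of_mul_eq_one (a := a) ⟨(a : K)⁻¹, hinv⟩
  apply Subtype.ext
  show (a : K) * (a : K)⁻¹ = 1
  exact mul_inv_cancel₀ hane

/-- Residue field map induced when `B.comap f = A`. -/
noncomputable def residueMap (f : K →+* L) (A : ValuationSubring K) (B : ValuationSubring L)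
    (h : B.comap f = A) : ResidueField A →+* ResidueField B :=
  letI := isLocalHom_inducedHom f A B h
  ResidueField.map (inducedHom f A B h)

/-- The ramification index `(v(L^×) : v(K^×))` for an extension of valued fields:
the index of the subgroup of `Lˣ` generated by the image of `Kˣ` together with the
units of the valuation subring `B` of `L`. -/
noncomputable def ramIdx (f : K →+* L) (B : ValuationSubring L) : ℕ :=
  ((Units.map f.toMonoidHom).range ⊔ B.unitGroup).index

/-- The residue degree `[Lv : Kv]` for an extension of valued fields. -/
noncomputable def resDeg (f : K →+* L) (A : ValuationSubring K) (B : ValuationSubring L)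
    (h : B.comap f = A) : ℕ :=
  letI := (residueMap f A B h).toAlgebra
  Module.finrank (ResidueField A) (ResidueField B)

/-- A valued field `(K, A)` is defectless if for every finite field extension `L/K` and
every valuation subring `B` of `L` lying over `A`, the fundamental equality
`[L : K] = (v(L^×) : v(K^×)) · [Lv : Kv]` holds. -/
def IsDefectless (A : ValuationSubring K) : Prop :=
  ∀ (L' : Type) [Field L'] [Algebra K L'] [FiniteDimensional K L']
    (B : ValuationSubring L') (h : B.comap (algebraMap K L') = A),
    Module.finrank K L' = ramIdx (algebraMap K L') B * resDeg (algebraMap K L') A B h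

/-- The value group `v(K^×)` is `p`-divisible. -/
def PDivisibleValueGroup (p : ℕ) (A : ValuationSubring K) : Prop :=
  ∀ x : Kˣ, ∃ y : Kˣ, x / y ^ p ∈ A.unitGroup

/-- The valuation is roughly `p`-divisible: every `γ` with `-v(p) ≤ γ ≤ v(p)` lies in `pΓ`. -/
def RoughlyPDivisible (p : ℕ) (A : ValuationSubring K) : Prop :=
  p ≠ 0 → ∀ x : Kˣ, ((p : K) * (x : K) ∈ A ∧ (p : K) / (x : K) ∈ A) →
    ∃ y : Kˣ, x / y ^ p ∈ A.unitGroup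

/-- Every finite field extension of the residue field has degree prime to `p`. -/
def ResidueFiniteExtPrimeTo (p : ℕ) (A : ValuationSubring K) : Prop :=
  ∀ (k : Type) [Field k] [Algebra (ResidueField A) k] [FiniteDimensional (ResidueField A) k],
    Nat.Coprime p (Module.finrank (ResidueField A) k)

/-- `(K, A)` is a model of `T₁` with residue characteristic `p`. -/
def IsT1Model (p : ℕ) (A : ValuationSubring K) : Prop :=
  HenselianLocalRing A ∧ IsDefectless A ∧ PerfectField K ∧ PerfectField (ResidueField A) ∧
    CharP (ResidueField A) p ∧ RoughlyPDivisible p A ∧ ResidueFiniteExtPrimeTo p A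
/-- Any valuation subring of a field extends to a valuation subring of a field extension. -/
lemma exists_comap_eq (F L : Type*) [Field F] [Field L] [Algebra F L]
    (A : ValuationSubring F) :
    ∃ B : ValuationSubring L, B.comap (algebraMap F L) = A := by
  obtain ⟨B, hmem, hloc⟩ :=
    IsLocalRing.exists_factor_valuationRing ((algebraMap F L).comp A.subtype)
  refine ⟨B, ?_⟩
  ext x
  rw [ValuationSubring.mem_comap]
  constructor
  · intro hx
    by_contra hxA
    have hxinv : x⁻¹ ∈ A := (A.mem_or_inv_mem x).resolve_left hxA
    have hx0 : x ≠ 0 := fun h => hxA (h ▸ A.zero_mem)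
    have hnu : ¬ IsUnit (⟨x⁻¹, hxinv⟩ : A) := by
      intro hu
      obtain ⟨u, hu⟩ := hu
      have : ((u⁻¹ : Aˣ) : A) * ⟨x⁻¹, hxinv⟩ = 1 := by rw [← hu]; exact u.inv_mul
      have h2 : (((u⁻¹ : Aˣ) : A) : F) * x⁻¹ = 1 := congrArg Subtype.val this
      have hxe := inv_eq_of_mul_eq_one_left h2
      rw [inv_inv] at hxe
      exact hxA (hxe ▸ (((u⁻¹ : Aˣ) : A)).2)
    apply hnu
    apply hloc.1
    have hval : (((algebraMap F L).comp A.subtype).codRestrict B.toSubring hmem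
        ⟨x⁻¹, hxinv⟩ : B) * ⟨algebraMap F L x, hx⟩ = 1 := by
      apply Subtype.ext
      show algebraMap F L x⁻¹ * algebraMap F L x = 1
      rw [map_inv₀, inv_mul_cancel₀]
      exact (map_ne_zero _).mpr hx0
    exact IsUnit.of_mul_eq_one _ hval
  · intro hx
    exact hmem ⟨x, hx⟩

lemma mem_unitGroup_iff' {K : Type*} [Field K] (A : ValuationSubring K) (x : Kˣ) :
    x ∈ A.unitGroup ↔ (x : K) ∈ A ∧ ((x⁻¹ : Kˣ) : K) ∈ A := by
  rw [ValuationSubring.mem_unitGroup_iff]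
  constructor
  · intro h
    refine ⟨(A.valuation_le_one_iff _).mp h.le, (A.valuation_le_one_iff _).mp ?_⟩
    rw [Units.val_inv_eq_inv_val, map_inv₀, h, inv_one]
  · rintro ⟨h1, h2⟩
    refine le_antisymm ((A.valuation_le_one_iff _).mpr h1) ?_
    have hmul : A.valuation (x : K) * A.valuation ((x⁻¹ : Kˣ) : K) = 1 := by
      rw [← map_mul]
      simp
    calc (1 : A.ValueGroup) = A.valuation (x : K) * A.valuation ((x⁻¹ : Kˣ) : K) := hmul.symm
      _ ≤ A.valuation (x : K) * 1 :=
        mul_le_mul_right ((A.valuation_le_one_iff _).mpr h2) _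
      _ = A.valuation (x : K) := mul_one _

lemma resDeg_ne_self {K L : Type} [Field K] [Field L] (A : ValuationSubring K)
    (B : ValuationSubring L) (g : ResidueField A →+* ResidueField B) {p : ℕ} (hp : p.Prime)
    (hres : ResidueFiniteExtPrimeTo p A)
    (hkey : p = (letI := g.toAlgebra
      Module.finrank (ResidueField A) (ResidueField B))) : False := by
  letI := g.toAlgebra
  have key' : p = Module.finrank (ResidueField A) (ResidueField B) := hkey
  haveI : FiniteDimensional (ResidueField A) (ResidueField B) :=
    Module.finite_of_finrank_pos (by rw [← key']; exact hp.pos)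
  have hcop := hres (ResidueField B)
  rw [← key'] at hcop
  have hone : p = 1 := by
    unfold Nat.Coprime at hcop
    rwa [Nat.gcd_self] at hcop
  exact hp.one_lt.ne' hone

/- STATEMENT 11: A henselian defectless valued field of equal characteristic p > 0 with
p-divisible value group, all of whose residue field's finite extensions have degree prime
to p, is perfect. -/
theorem perfectField_of_equal_char_p
    {F : Type} [Field F] (A : ValuationSubring F) [HenselianLocalRing A]
    (p : ℕ) (hp : p.Prime) [CharP F p] [CharP (ResidueField A) p]
    (hdef : IsDefectless A)
    (hdiv : PDivisibleValueGroup p A)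
    (hres : ResidueFiniteExtPrimeTo p A) :
    PerfectField F := by
  have hp0 : p ≠ 0 := hp.ne_zero
  haveI : ExpChar F p := ExpChar.prime hp
  have hsurj : Function.Surjective (frobenius F p) := by
    intro a
    by_contra hno
    push_neg at hno
    have hno' : ∀ b : F, b ^ p ≠ a := fun b hb => hno b (by rw [frobenius_def]; exact hb)
    have hirr : Irreducible (Polynomial.X ^ p - Polynomial.C a) :=
      X_pow_sub_C_irreducible_of_prime hp hno'
    haveI : Fact (Irreducible (Polynomial.X ^ p - Polynomial.C a)) := ⟨hirr⟩
    set L : Type := AdjoinRoot (Polynomial.X ^ p - Polynomial.C a) with hL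
    have hq0 : (Polynomial.X ^ p - Polynomial.C a) ≠ 0 := hirr.ne_zero
    haveI : FiniteDimensional F L := (AdjoinRoot.powerBasis hq0).finite
    have hfr : Module.finrank F L = p := by
      rw [(AdjoinRoot.powerBasis hq0).finrank]
      show (Polynomial.X ^ p - Polynomial.C a).natDegree = p
      exact Polynomial.natDegree_X_pow_sub_C
    obtain ⟨B, hB⟩ := exists_comap_eq F L A
    have key := hdef L B hB
    rw [hfr] at key
    have hdvd : ramIdx (algebraMap F L) B ∣ p := ⟨_, key⟩
    -- images of `A.unitGroup` lie in `B.unitGroup`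
    have himg : ∀ x : Fˣ, x ∈ A.unitGroup →
        Units.map (algebraMap F L).toMonoidHom x ∈ B.unitGroup := by
      intro x hx
      rw [mem_unitGroup_iff'] at hx ⊢
      constructor
      · have : (x : F) ∈ B.comap (algebraMap F L) := hB.symm ▸ hx.1
        exact ValuationSubring.mem_comap.mp this
      · have : ((x⁻¹ : Fˣ) : F) ∈ B.comap (algebraMap F L) := hB.symm ▸ hx.2
        have h2 := ValuationSubring.mem_comap.mp this
        simpa using h2
    rcases hp.eq_one_or_self_of_dvd _ hdvd with h1 | hpram
    · -- residue degree is `p`, contradicting coprimality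
      rw [h1, one_mul] at key
      exact resDeg_ne_self A B (residueMap (algebraMap F L) A B hB) hp hres key
    · -- ramification index is `p`
      set N : Subgroup Lˣ :=
        (Units.map (algebraMap F L).toMonoidHom).range ⊔ B.unitGroup with hNdef
      have hidx : N.index = p := hpram
      have hclosed : ∀ u : Lˣ, u ^ p ∈ N → u ∈ N := by
        intro u hu
        rw [hNdef, Subgroup.mem_sup] at hu
        obtain ⟨y, hy, z, hz, hyz⟩ := hu
        obtain ⟨c, rfl⟩ := hy
        obtain ⟨d, hd⟩ := hdiv c
        set md := Units.map (algebraMap F L).toMonoidHom d with hmd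
        set w := u / md with hw
        have hwp : w ^ p ∈ B.unitGroup := by
          have hcalc : w ^ p = Units.map (algebraMap F L).toMonoidHom (c / d ^ p) * z := by
            rw [hw, div_pow, ← hyz, map_div, map_pow]
            exact (mul_div_right_comm _ z _)
          rw [hcalc]
          exact B.unitGroup.mul_mem (himg _ hd) hz
        have hwmem : w ∈ B.unitGroup := by
          rw [ValuationSubring.mem_unitGroup_iff] at hwp ⊢
          have : (B.valuation (w : L)) ^ p = 1 := by
            rw [← map_pow, ← Units.val_pow_eq_pow_val]
            exact hwp
          exact (pow_eq_one_iff.mp this).resolve_right hp0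
        have hu' : u = w * md := by rw [hw, div_mul_cancel]
        rw [hu']
        exact N.mul_mem (Subgroup.mem_sup_right hwmem) (Subgroup.mem_sup_left ⟨d, rfl⟩)
      have htop : N = ⊤ := by
        rw [eq_top_iff]
        intro u _
        apply hclosed
        have h1 : ((u : Lˣ ⧸ N)) ^ Nat.card (Lˣ ⧸ N) = 1 := pow_card_eq_one'
        have hcard : Nat.card (Lˣ ⧸ N) = p := hidx
        rw [hcard] at h1
        rwa [← QuotientGroup.mk_pow, QuotientGroup.eq_one_iff] at h1
      rw [htop, Subgroup.index_top] at hidx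
      exact hp.one_lt.ne' hidx.symm
  haveI : PerfectRing F p := PerfectRing.ofSurjective F p hsurj
  exact PerfectRing.toPerfectField F p

end Paper
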